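/- Let the action of G on (X, μ) be ergodic, let L be a representation of X⋊G on a separable complex Hilbert space K, and let b be an L-cocycle. Assume there exists a measurable E ⊆ X with μ(E) > 0 such that for every x ∈ E, sup{ ‖b(x,g)‖ : g ∈ G, g⁻¹•x ∈ E } < ∞. Then b is cohomologous to an L-cocycle b' (i.e. b − b' is an L-coboundary) for which there exists a μ-conull measurable U ⊆ X such that for every x ∈ U, sup{ ‖b'(x,g)‖ : g ∈ G, g⁻¹•x ∈ U } < ∞. -/

import Mathlib

open MeasureTheory Filter Topology
open scoped Pointwise symmDiff InnerProductSpace ENNReal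

section Defs

variable (G : Type*) {X : Type*} [Group G] [MulAction G X] [MeasurableSpace X]

/-- The action of `G` on `X` is measurable and the measure `μ` is quasi-invariant:
for every `g`, the pushforward of `μ` under `x ↦ g • x` is equivalent to `μ`. -/
def QuasiInvariantAction (μ : Measure X) : Prop :=
  (∀ g : G, Measurable fun x : X => g • x) ∧
    ∀ g : G, μ.map (fun x : X => g • x) ≪ μ ∧ μ ≪ μ.map (fun x : X => g • x)

/-- Ergodicity of the action: every measurable `A` with `μ((g • A) ∆ A) = 0` for all `g`
is null or conull. -/
def IsErgodicSMulAction (μ : Measure X) : Prop :=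
  ∀ A : Set X, MeasurableSet A → (∀ g : G, μ ((g • A) ∆ A) = 0) → μ A = 0 ∨ μ A = 1

variable {G}
variable {K : Type*} [NormedAddCommGroup K] [InnerProductSpace ℂ K]
  [MeasurableSpace K] [BorelSpace K]

/-- A representation of the action groupoid `X ⋊ G` on the Hilbert space `K`. -/
def IsGroupoidRep (μ : Measure X) (L : X → G → (K ≃ₗᵢ[ℂ] K)) : Prop :=
  (∀ (g : G) (v : K), Measurable fun x : X => L x g v) ∧
    ∀ g₁ g₂ : G, ∀ᵐ x ∂μ, ∀ v : K, L x (g₁ * g₂) v = L x g₁ (L (g₁⁻¹ • x) g₂ v)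

/-- An `L`-cocycle. -/
def IsLCocycle (μ : Measure X) (L : X → G → (K ≃ₗᵢ[ℂ] K)) (b : X → G → K) : Prop :=
  (∀ g : G, Measurable fun x : X => b x g) ∧
    ∀ g₁ g₂ : G, ∀ᵐ x ∂μ, b x (g₁ * g₂) = b x g₁ + L x g₁ (b (g₁⁻¹ • x) g₂)

/-- An `L`-coboundary. -/
def IsLCoboundary (μ : Measure X) (L : X → G → (K ≃ₗᵢ[ℂ] K)) (b : X → G → K) : Prop :=
  ∃ ξ : X → K, Measurable ξ ∧ ∀ g : G, ∀ᵐ x ∂μ, b x g = ξ x - L x g (ξ (g⁻¹ • x))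

/-- A unit section: a measurable map `ξ : X → K` of norm one almost everywhere. -/
def IsUnitSection (μ : Measure X) (ξ : X → K) : Prop :=
  Measurable ξ ∧ ∀ᵐ x ∂μ, ‖ξ x‖ = 1

/-- The representation `L` has an invariant unit section. -/
def HasInvariantUnitSection (μ : Measure X) (L : X → G → (K ≃ₗᵢ[ℂ] K)) : Prop :=
  ∃ ξ : X → K, IsUnitSection μ ξ ∧ ∀ g : G, ∀ᵐ x ∂μ, L x g (ξ (g⁻¹ • x)) = ξ x

/-- The representation `L` almost has invariant unit sections. -/
def AlmostHasInvariantUnitSections (μ : Measure X) (L : X → G → (K ≃ₗᵢ[ℂ] K)) : Prop :=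
  ∃ ξ : ℕ → X → K, (∀ n, IsUnitSection μ (ξ n)) ∧
    ∀ g : G, ∀ᵐ x ∂μ,
      Tendsto (fun n => ‖L x g (ξ n (g⁻¹ • x)) - ξ n x‖) atTop (𝓝 0)

variable (G)

/-- Property (T) for the action of `G` on `(X, μ)`: every representation of `X ⋊ G`
on a separable complex Hilbert space that almost has invariant unit sections has an
invariant unit section. -/
def ActionHasPropertyT (μ : Measure X) : Prop :=
  ∀ (K : Type) [NormedAddCommGroup K] [InnerProductSpace ℂ K]
    [CompleteSpace K] [SecondCountableTopology K]
    [MeasurableSpace K] [BorelSpace K]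
    (L : X → G → (K ≃ₗᵢ[ℂ] K)),
    IsGroupoidRep μ L → AlmostHasInvariantUnitSections μ L → HasInvariantUnitSection μ L

end Defs

lemma measurable_L_comp' {X : Type*} [MeasurableSpace X] {G : Type*}
    {K : Type*} [NormedAddCommGroup K] [InnerProductSpace ℂ K]
    [SecondCountableTopology K] [MeasurableSpace K] [BorelSpace K]
    (L : X → G → (K ≃ₗᵢ[ℂ] K)) (hL1 : ∀ (g : G) (v : K), Measurable fun x => L x g v)
    (g : G) {w : X → K} (hw : Measurable w) :
    Measurable fun x => L x g (w x) := by
  classical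
  have hsimp : ∀ s : SimpleFunc X K, Measurable fun x => L x g (s x) := by
    intro s
    induction s using MeasureTheory.SimpleFunc.induction with
    | const c ht =>
        rename_i t
        have heq : (fun x => L x g ((SimpleFunc.piecewise t ht (SimpleFunc.const X c)
            (SimpleFunc.const X 0)) x)) = fun x => if x ∈ t then L x g c else L x g 0 := by
          ext x; by_cases hx : x ∈ t <;> simp [SimpleFunc.piecewise_apply, hx]
        rw [heq]
        exact Measurable.ite ht (hL1 g c) (hL1 g 0)
    | add hdis hf hf' =>
        rename_i f f'
        clear hdis
        have heq : (fun x => L x g ((f + f') x)) = fun x => L x g (f x) + L x g (f' x) := by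
          ext x; simp
        rw [heq]; exact hf.add hf'
  have h0 : (0 : K) ∈ (Set.univ : Set K) := Set.mem_univ 0
  refine measurable_of_tendsto_metrizable
    (fun n => hsimp (SimpleFunc.approxOn w hw Set.univ 0 h0 n)) ?_
  rw [tendsto_pi_nhds]
  intro x
  have h1 : Tendsto (fun n => SimpleFunc.approxOn w hw Set.univ 0 h0 n x) atTop (𝓝 (w x)) :=
    SimpleFunc.tendsto_approxOn hw h0 (by simp)
  exact ((L x g).continuous.tendsto (w x)).comp h1

/-- Let `G` be a countable discrete group with an ergodic quasi-invariant action on a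
standard Borel probability space `(X, μ)`, `L` a representation of `X ⋊ G` on a separable
complex Hilbert space and `b` an `L`-cocycle. If there is a positive-measure measurable
`E ⊆ X` such that `sup { ‖b(x,g)‖ : g⁻¹ • x ∈ E } < ∞` for every `x ∈ E`, then `b` is
cohomologous to an `L`-cocycle `b'` which satisfies the analogous bound on a conull set. -/
theorem cocycle_bounded_on_set_cohomologous_to_bounded_on_conull
    {G X : Type*} [Group G] [Countable G]
    [MeasurableSpace X] [StandardBorelSpace X] [MulAction G X]
    (μ : Measure X) [IsProbabilityMeasure μ]
    (hqi : QuasiInvariantAction G μ) (herg : IsErgodicSMulAction G μ)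
    {K : Type*} [NormedAddCommGroup K] [InnerProductSpace ℂ K]
    [CompleteSpace K] [SecondCountableTopology K] [MeasurableSpace K] [BorelSpace K]
    (L : X → G → (K ≃ₗᵢ[ℂ] K)) (hL : IsGroupoidRep μ L)
    (b : X → G → K) (hb : IsLCocycle μ L b)
    (E : Set X) (hEmeas : MeasurableSet E) (hEpos : 0 < μ E)
    (hbound : ∀ x ∈ E, ∃ C : ℝ, ∀ g : G, g⁻¹ • x ∈ E → ‖b x g‖ ≤ C) :
    ∃ b' : X → G → K, IsLCocycle μ L b' ∧
      IsLCoboundary μ L (fun x g => b x g - b' x g) ∧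
      ∃ U : Set X, MeasurableSet U ∧ μ Uᶜ = 0 ∧
        ∀ x ∈ U, ∃ C : ℝ, ∀ g : G, g⁻¹ • x ∈ U → ‖b' x g‖ ≤ C := by
  classical
  obtain ⟨e, he⟩ := exists_surjective_nat G
  set P : X → Prop := fun x => ∃ n : ℕ, (e n)⁻¹ • x ∈ E with hPdef
  set S : Set X := {x | P x} with hSdef
  have hSmeas : MeasurableSet S := by
    have : S = ⋃ n : ℕ, (fun x => (e n)⁻¹ • x) ⁻¹' E := by
      ext x; simp [hSdef, hPdef]
    rw [this]; exact MeasurableSet.iUnion fun n => hEmeas.preimage (hqi.1 _)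
  -- S is strictly invariant
  have hSinv : ∀ g : G, g • S = S := by
    intro g
    ext x
    rw [Set.mem_smul_set_iff_inv_smul_mem]
    constructor
    · rintro ⟨n, hn⟩
      obtain ⟨m, hm⟩ := he (g * e n)
      refine ⟨m, ?_⟩
      rw [hm, mul_inv_rev, mul_smul]
      exact hn
    · rintro ⟨n, hn⟩
      obtain ⟨m, hm⟩ := he (g⁻¹ * e n)
      refine ⟨m, ?_⟩
      rw [hm, mul_inv_rev, inv_inv, smul_smul, mul_inv_cancel_right]
      exact hn
  have hEsubS : E ⊆ S := by
    intro x hx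
    obtain ⟨n, hn⟩ := he 1
    exact ⟨n, by rw [hn]; simpa using hx⟩
  have hScon : μ Sᶜ = 0 := by
    have herg' := herg S hSmeas (fun g => by rw [hSinv g]; simp)
    rcases herg' with h0 | h1
    · exact absurd (le_zero_iff.1 ((measure_mono hEsubS).trans_eq h0)) hEpos.ne'
    · rw [measure_compl hSmeas (measure_ne_top μ S), h1, measure_univ, tsub_self]
  -- the transfer function ξ
  set ξ : X → K := fun x => if h : P x then b x (e (Nat.find h)) else 0 with hξdef
  -- measurability of ξ
  set A : ℕ → Set X := fun n =>
    (fun x => (e n)⁻¹ • x) ⁻¹' E ∩ ⋂ m < n, ((fun x => (e m)⁻¹ • x) ⁻¹' E)ᶜ with hAdef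
  have hAmeas : ∀ n, MeasurableSet (A n) :=
    fun n => (hEmeas.preimage (hqi.1 _)).inter
      (MeasurableSet.biInter (Set.to_countable _)
        fun m _ => (hEmeas.preimage (hqi.1 _)).compl)
  have hAfind : ∀ x (h : P x), x ∈ A (Nat.find h) := by
    intro x h
    refine ⟨Nat.find_spec h, ?_⟩
    simp only [Set.mem_iInter, Set.mem_compl_iff, Set.mem_preimage]
    exact fun m hm => Nat.find_min h hm
  have hAeq : ∀ x n, x ∈ A n → ∃ h : P x, Nat.find h = n := by
    intro x n hx
    obtain ⟨hx1, hx2⟩ := hx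
    simp only [Set.mem_iInter, Set.mem_compl_iff, Set.mem_preimage] at hx2
    have hx1' : (e n)⁻¹ • x ∈ E := hx1
    have h : P x := ⟨n, hx1'⟩
    refine ⟨h, le_antisymm (Nat.find_min' h hx1') ?_⟩
    by_contra hlt
    exact hx2 _ (lt_of_not_ge hlt) (Nat.find_spec h)
  have hξmeas : Measurable ξ := by
    intro B hB
    have : ξ ⁻¹' B =
        (⋃ n, A n ∩ {x | b x (e n) ∈ B}) ∪ ({x | ¬ P x} ∩ {x | (0 : K) ∈ B}) := by
      ext x
      by_cases h : P x
      · simp only [Set.mem_preimage, Set.mem_union, Set.mem_iUnion, Set.mem_inter_iff,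
          Set.mem_setOf_eq, h, not_true_eq_false, false_and, or_false]
        constructor
        · intro hx
          refine ⟨Nat.find h, hAfind x h, ?_⟩
          simpa [hξdef, h] using hx
        · rintro ⟨n, hn, hbn⟩
          obtain ⟨h', hfind⟩ := hAeq x n hn
          simp only [hξdef]
          rw [dif_pos h]
          rw [show Nat.find h = n from hfind]
          exact hbn
      · simp only [Set.mem_preimage, Set.mem_union, Set.mem_iUnion, Set.mem_inter_iff,
          Set.mem_setOf_eq, h, not_false_eq_true, true_and]
        constructor
        · intro hx
          right
          simpa [hξdef, h] using hx
        · rintro (⟨n, hn, -⟩ | h0)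
          · exact absurd (hAeq x n hn).choose h
          · simpa [hξdef, h] using h0
    rw [this]
    refine MeasurableSet.union ?_ ?_
    · exact MeasurableSet.iUnion fun n => (hAmeas n).inter (hb.1 (e n) hB)
    · refine MeasurableSet.inter ?_ (MeasurableSet.const _)
      have : {x : X | ¬ P x} = Sᶜ := rfl
      rw [this]; exact hSmeas.compl
  -- the new cocycle
  set b' : X → G → K := fun x g => b x g - ξ x + L x g (ξ (g⁻¹ • x)) with hb'def
  have hb'meas : ∀ g : G, Measurable fun x => b' x g := by
    intro g
    exact ((hb.1 g).sub hξmeas).add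
      (measurable_L_comp' L hL.1 g (hξmeas.comp (hqi.1 g⁻¹)))
  have hb'coc : ∀ g₁ g₂ : G, ∀ᵐ x ∂μ,
      b' x (g₁ * g₂) = b' x g₁ + L x g₁ (b' (g₁⁻¹ • x) g₂) := by
    intro g₁ g₂
    filter_upwards [hb.2 g₁ g₂, hL.2 g₁ g₂] with x h1 h2
    have hsm : (g₁ * g₂)⁻¹ • x = g₂⁻¹ • g₁⁻¹ • x := by rw [mul_inv_rev, mul_smul]
    simp only [hb'def]
    rw [h1, hsm, h2]
    simp only [map_add, map_sub]
    abel
  refine ⟨b', ⟨hb'meas, hb'coc⟩, ⟨ξ, hξmeas, fun g => Eventually.of_forall fun x => ?_⟩, ?_⟩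
  · simp only [hb'def]; abel
  -- the conull set
  set T : Set X := {x | ¬ ∀ g₁ g₂ : G, b x (g₁ * g₂) = b x g₁ + L x g₁ (b (g₁⁻¹ • x) g₂)}
    with hTdef
  have hT : μ T = 0 := by
    have hae : ∀ᵐ x ∂μ, ∀ g₁ g₂ : G, b x (g₁ * g₂) = b x g₁ + L x g₁ (b (g₁⁻¹ • x) g₂) :=
      ae_all_iff.2 fun g₁ => ae_all_iff.2 fun g₂ => hb.2 g₁ g₂
    exact ae_iff.1 hae
  set N : Set X := toMeasurable μ T with hNdef
  have hNmeas : MeasurableSet N := measurableSet_toMeasurable μ T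
  have hN : μ N = 0 := by rw [hNdef, measure_toMeasurable]; exact hT
  refine ⟨S ∩ Nᶜ, hSmeas.inter hNmeas.compl, ?_, ?_⟩
  · rw [Set.compl_inter, compl_compl]
    exact le_antisymm ((measure_union_le _ _).trans (by rw [hScon, hN, add_zero]))
      (zero_le)
  · rintro x ⟨hxS, hxN⟩
    have hPx : P x := hxS
    have hQ : ∀ g₁ g₂ : G, b x (g₁ * g₂) = b x g₁ + L x g₁ (b (g₁⁻¹ • x) g₂) := by
      by_contra h
      exact hxN (subset_toMeasurable μ T h)
    set gx : G := e (Nat.find hPx) with hgxdef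
    set y : X := gx⁻¹ • x with hydef
    have hy : y ∈ E := Nat.find_spec hPx
    obtain ⟨C, hC⟩ := hbound y hy
    refine ⟨C, ?_⟩
    rintro g ⟨hgS, -⟩
    have hPz : P (g⁻¹ • x) := hgS
    set gz : G := e (Nat.find hPz) with hgzdef
    have hz : gz⁻¹ • (g⁻¹ • x) ∈ E := Nat.find_spec hPz
    have hξx : ξ x = b x gx := by simp only [hξdef]; rw [dif_pos hPx]
    have hξz : ξ (g⁻¹ • x) = b (g⁻¹ • x) gz := by
      simp only [hξdef]; rw [dif_pos hPz]
    have step1 : b x (g * gz) = b x g + L x g (b (g⁻¹ • x) gz) := hQ g gz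
    have step2 : b x (g * gz) = b x gx + L x gx (b (gx⁻¹ • x) (gx⁻¹ * (g * gz))) := by
      have := hQ gx (gx⁻¹ * (g * gz))
      rwa [mul_inv_cancel_left] at this
    have hb'eq : b' x g = L x gx (b y (gx⁻¹ * (g * gz))) := by
      simp only [hb'def]
      rw [hξx, hξz, hydef]
      calc b x g - b x gx + L x g (b (g⁻¹ • x) gz)
          = b x (g * gz) - b x gx := by rw [step1]; abel
        _ = L x gx (b (gx⁻¹ • x) (gx⁻¹ * (g * gz))) := by rw [step2]; abel
    have hmem : (gx⁻¹ * (g * gz))⁻¹ • y ∈ E := by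
      have : (gx⁻¹ * (g * gz))⁻¹ • y = gz⁻¹ • (g⁻¹ • x) := by
        rw [hydef, smul_smul, smul_smul]
        congr 1
        group
      rw [this]
      exact hz
    calc ‖b' x g‖ = ‖b y (gx⁻¹ * (g * gz))‖ := by
          rw [hb'eq, LinearIsometryEquiv.norm_map]
      _ ≤ C := hC _ hmem
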